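/- Let q be a prime power, Q = q-1, r ≥ 1, and v with rQ/2 < v < (r+1)Q/2; write 2v = rQ + β, 0 < β < Q, L = rQ - v, U = v. Index rows by tuples a ∈ {0,...,Q}^r with L ≤ |a| ≤ U, columns by tuples b in the same set. Define the matrix P with entry at (a,b) equal to the projective inner product ⟨ev(M_a), ev(M_{b̄})⟩ over P^r(F_q), where M_a = z_0^{v-|a|} z_1^{a_1}···z_r^{a_r} and b̄ = (Q-b_1,...,Q-b_r). Then the diagonal entry at (a,a) equals (-1)^r, and for a ≠ b a nonzero entry forces |a| = U and |b| = L. -/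

import Mathlib

/-- The sum of the monomial with exponent vector `c` over the standard
representatives of the points of `ℙ^m(F)` (vectors whose first nonzero
coordinate equals `1`). -/
def projSum (F : Type*) [Field F] [Fintype F] [DecidableEq F] (m : ℕ)
    (c : Fin (m + 1) → ℕ) : F :=
  ∑ p ∈ Finset.univ.filter
      (fun p : Fin (m + 1) → F => ∃ j, p j = 1 ∧ ∀ i, i < j → p i = 0),
    ∏ i, p i ^ c i

/-- The entry of the top-layer matrix at `(a, b)`: the projective inner product
`⟨ev(M_a), ev(M_{b̄})⟩` over `ℙ^r(F_q)`, where `M_a = z_0^{v-|a|} z_1^{a_1} ⋯ z_r^{a_r}`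
and `b̄ = (Q - b_1, …, Q - b_r)`, `Q = q - 1`, `L = rQ - v`. -/
def topEntry (F : Type*) [Field F] [Fintype F] [DecidableEq F]
    (q r v : ℕ) (a b : Fin r → ℕ) : F :=
  projSum F r (fun i =>
    (Fin.cons (v - ∑ j, a j) a : Fin (r + 1) → ℕ) i +
      (Fin.cons ((∑ j, b j) - (r * (q - 1) - v)) (fun j => (q - 1) - b j) :
        Fin (r + 1) → ℕ) i)

/-- Sum of `x ^ c` over a finite field. -/
lemma sum_pow_field (F : Type*) [Field F] [Fintype F] [DecidableEq F] (c : ℕ) :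
    ∑ x : F, x ^ c =
      if c ≠ 0 ∧ (Fintype.card F - 1) ∣ c then (-1 : F) else 0 := by
  classical
  by_cases hc : c = 0
  · subst hc
    simp [FiniteField.cast_card_eq_zero, Finset.card_univ]
  · have hmap : (Finset.univ.map ⟨(fun x : Fˣ => (x : F)), fun _ _ => Units.ext⟩) =
        Finset.univ \ {(0 : F)} := by
      ext x
      simp only [Finset.mem_map, Finset.mem_univ, Function.Embedding.coeFn_mk, true_and,
        Finset.mem_sdiff, Finset.mem_singleton]
      exact
          (show (∃ a : Fˣ, (a : F) = x) ↔ x ≠ 0 from isUnit_iff_ne_zero)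
    have key : ∑ x : F, x ^ c = if (Fintype.card F - 1) ∣ c then (-1 : F) else 0 := by
      calc
        ∑ x : F, x ^ c = ∑ x ∈ Finset.univ \ {(0 : F)}, x ^ c := by
          rw [← Finset.sum_sdiff (({0} : Finset F).subset_univ), Finset.sum_singleton,
            zero_pow hc, add_zero]
        _ = ∑ x : Fˣ, ((x : F)) ^ c := by
          rw [← hmap, Finset.sum_map]; rfl
        _ = if (Fintype.card F - 1) ∣ c then (-1 : F) else 0 := by
          simpa using FiniteField.sum_pow_units F c
    rw [key]
    by_cases hd : (Fintype.card F - 1) ∣ c <;> simp [hd, hc]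

/-- Evaluation of `projSum` when the first exponent is nonzero. -/
lemma projSum_eq (F : Type*) [Field F] [Fintype F] [DecidableEq F] (m : ℕ)
    (c : Fin (m + 1) → ℕ) (h0 : c 0 ≠ 0) :
    projSum F m c = ∏ i : Fin m,
      (if c i.succ ≠ 0 ∧ (Fintype.card F - 1) ∣ c i.succ then (-1 : F) else 0) := by
  classical
  rw [projSum]
  have hsub : (Finset.univ.filter (fun p : Fin (m + 1) → F => p 0 = 1)) ⊆
      (Finset.univ.filter
        (fun p : Fin (m + 1) → F => ∃ j, p j = 1 ∧ ∀ i, i < j → p i = 0)) := by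
    intro p hp
    simp only [Finset.mem_filter, Finset.mem_univ, true_and] at hp ⊢
    exact ⟨0, hp, fun i hi => absurd hi (Fin.not_lt_zero i)⟩
  have hzero : ∀ p ∈ Finset.univ.filter
      (fun p : Fin (m + 1) → F => ∃ j, p j = 1 ∧ ∀ i, i < j → p i = 0),
      p ∉ Finset.univ.filter (fun p : Fin (m + 1) → F => p 0 = 1) →
      ∏ i, p i ^ c i = 0 := by
    intro p hp hp'
    simp only [Finset.mem_filter, Finset.mem_univ, true_and] at hp hp'
    obtain ⟨j, hj1, hj2⟩ := hp
    have hj0 : (0 : Fin (m + 1)) < j := Fin.pos_iff_ne_zero.mpr (fun h => hp' (h ▸ hj1))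
    have hp0 : p 0 = 0 := hj2 0 hj0
    apply Finset.prod_eq_zero (Finset.mem_univ 0)
    rw [hp0, zero_pow h0]
  rw [← Finset.sum_subset hsub hzero]
  have hset : (Finset.univ.filter (fun p : Fin (m + 1) → F => p 0 = 1)) =
      Fintype.piFinset (fun i : Fin (m + 1) =>
        if i = 0 then ({1} : Finset F) else Finset.univ) := by
    ext p
    simp only [Finset.mem_filter, Finset.mem_univ, true_and, Fintype.mem_piFinset]
    constructor
    · intro h i
      by_cases hi : i = 0 <;> simp [hi, h]
    · intro h
      simpa using h 0
  rw [hset, ← Finset.prod_univ_sum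
    (fun i : Fin (m + 1) => if i = 0 then ({1} : Finset F) else Finset.univ)
    (fun i (y : F) => y ^ c i)]
  rw [Fin.prod_univ_succ]
  have h00 : (∑ x ∈ (if (0 : Fin (m + 1)) = 0 then ({1} : Finset F) else Finset.univ),
      x ^ c 0) = 1 := by simp
  rw [h00, one_mul]
  apply Finset.prod_congr rfl
  intro i _
  rw [if_neg (Fin.succ_ne_zero i)]
  exact sum_pow_field F (c i.succ)

/-- Diagonal entries of the top-layer matrix equal `(-1)^r`, and a nonzero
off-diagonal entry forces `|a| = U = v` and `|b| = L = rQ - v`. -/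
theorem topEntry_diag_and_offdiag (F : Type*) [Field F] [Fintype F] [DecidableEq F]
    (q r v : ℕ) (hq : Fintype.card F = q) (hr : 1 ≤ r)
    (h1 : r * (q - 1) < 2 * v) (h2 : 2 * v < (r + 1) * (q - 1))
    (a b : Fin r → ℕ)
    (ha : ∀ i, a i ≤ q - 1) (haL : r * (q - 1) - v ≤ ∑ i, a i) (haU : ∑ i, a i ≤ v)
    (hb : ∀ i, b i ≤ q - 1) (hbL : r * (q - 1) - v ≤ ∑ i, b i) (hbU : ∑ i, b i ≤ v) :
    topEntry F q r v a a = (-1 : F) ^ r ∧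
    (a ≠ b → topEntry F q r v a b ≠ 0 →
      ∑ i, a i = v ∧ ∑ i, b i = r * (q - 1) - v) := by
  classical
  have h2' : 2 * v < r * (q - 1) + (q - 1) := by
    have : (r + 1) * (q - 1) = r * (q - 1) + (q - 1) := by ring
    omega
  have hQ1 : 1 ≤ q - 1 := by
    by_contra h
    omega
  constructor
  · -- diagonal
    rw [topEntry]
    have hc0 : ((Fin.cons (v - ∑ j, a j) a : Fin (r + 1) → ℕ) 0 +
        (Fin.cons ((∑ j, a j) - (r * (q - 1) - v)) (fun j => (q - 1) - a j) :
          Fin (r + 1) → ℕ) 0) ≠ 0 := by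
      simp only [Fin.cons_zero]
      omega
    rw [projSum_eq F r _ hc0]
    have : ∀ i : Fin r,
        ((Fin.cons (v - ∑ j, a j) a : Fin (r + 1) → ℕ) i.succ +
          (Fin.cons ((∑ j, a j) - (r * (q - 1) - v)) (fun j => (q - 1) - a j) :
            Fin (r + 1) → ℕ) i.succ) = q - 1 := by
      intro i
      simp only [Fin.cons_succ]
      have := ha i
      omega
    calc
      (∏ i : Fin r, if ((Fin.cons (v - ∑ j, a j) a : Fin (r + 1) → ℕ) i.succ +
          (Fin.cons ((∑ j, a j) - (r * (q - 1) - v)) (fun j => (q - 1) - a j) :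
            Fin (r + 1) → ℕ) i.succ) ≠ 0 ∧ (Fintype.card F - 1) ∣
          ((Fin.cons (v - ∑ j, a j) a : Fin (r + 1) → ℕ) i.succ +
          (Fin.cons ((∑ j, a j) - (r * (q - 1) - v)) (fun j => (q - 1) - a j) :
            Fin (r + 1) → ℕ) i.succ) then (-1 : F) else 0)
          = ∏ _i : Fin r, (-1 : F) := by
        apply Finset.prod_congr rfl
        intro i _
        rw [this i, if_pos]
        constructor
        · omega
        · rw [hq]
      _ = (-1 : F) ^ r := by
        rw [Finset.prod_const, Finset.card_univ, Fintype.card_fin]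
  · -- off-diagonal
    intro hab hne
    by_cases hc0 : ((v - ∑ j, a j) + ((∑ j, b j) - (r * (q - 1) - v))) = 0
    · constructor <;> omega
    · exfalso
      rw [topEntry] at hne
      have hc0' : ((Fin.cons (v - ∑ j, a j) a : Fin (r + 1) → ℕ) 0 +
          (Fin.cons ((∑ j, b j) - (r * (q - 1) - v)) (fun j => (q - 1) - b j) :
            Fin (r + 1) → ℕ) 0) ≠ 0 := by
        simpa only [Fin.cons_zero] using hc0
      rw [projSum_eq F r _ hc0'] at hne
      -- every factor is nonzero
      have hfac : ∀ i : Fin r, (a i + ((q - 1) - b i)) ≠ 0 ∧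
          (q - 1) ∣ (a i + ((q - 1) - b i)) := by
        intro i
        by_contra hcon
        apply hne
        apply Finset.prod_eq_zero (Finset.mem_univ i)
        rw [if_neg]
        simp only [Fin.cons_succ, hq]
        exact hcon
      -- each coordinate satisfies b i ≤ a i, and a i - b i ∈ {0, q-1}
      have hcoord : ∀ i : Fin r, b i ≤ a i ∧ (a i = b i ∨ (a i = q - 1 ∧ b i = 0)) := by
        intro i
        obtain ⟨hne0, k, hk⟩ := hfac i
        have hai := ha i
        have hbi := hb i
        have hk2 : k ≤ 2 := by
          by_contra hk3
          push_neg at hk3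
          have : 3 * (q - 1) ≤ (q - 1) * k := by
            calc 3 * (q - 1) = (q - 1) * 3 := by ring
            _ ≤ (q - 1) * k := Nat.mul_le_mul_left _ hk3
          omega
        interval_cases k <;> omega
      -- since a ≠ b, some coordinate has a i = q - 1 and b i = 0
      obtain ⟨i0, hi0ne⟩ := Function.ne_iff.mp hab
      have hi0 : b i0 + (q - 1) ≤ a i0 := by
        rcases (hcoord i0).2 with h | ⟨h1', h2'⟩
        · exact absurd h hi0ne
        · omega
      -- sum inequality: ∑ a ≥ ∑ b + (q - 1)
      have hsum : ∑ i, b i + (q - 1) ≤ ∑ i, a i := by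
        have hpt : ∀ i : Fin r, b i + (if i = i0 then (q - 1) else 0) ≤ a i := by
          intro i
          by_cases h : i = i0
          · subst h; simpa using hi0
          · simp only [h, if_false]
            simpa using (hcoord i).1
        calc ∑ i, b i + (q - 1)
            = ∑ i, (b i + if i = i0 then (q - 1) else 0) := by
              rw [Finset.sum_add_distrib,
                Finset.sum_ite_eq' Finset.univ i0 (fun _ => q - 1)]
              simp
          _ ≤ ∑ i, a i := Finset.sum_le_sum (fun i _ => hpt i)
      omega
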